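/- Consider N ≥ 1 AP-source pairs. For each i ∈ {1,…,N} fix G_i, K_i, p_i, λ_i > 0 and common σ², η, p_b, W > 0; define A_i := G_i²ηp_i/σ², X_i := G_iη(p_iG_i + p_b·K_i)/σ², z†_i > 1 solving z·ln z − z + 1 = A_i, E_i^lim := p_b(z†_i−1)/(z†_i−1+X_i), α_i := λ_iW·G_i·η·K_i/(z†_i·σ²·ln 2), z‡_i > 1 solving z·ln z − z + 1 = X_i, E_i^o := p_b(z‡_i−1)/(z‡_i−1+X_i), γ_i(ν) := p_b(z^§_i(ν)−1)σ²/((z^§_i(ν)−1)σ² + G_iη(p_iG_i + p_b·K_i)) for 0 ≤ ν < α_i where z^§_i(ν) > 1 solves z·ln z + (ν·p_b·ln 2/(λ_iW) − 1)·z + 1 = X_i, and S_i(E) := λ_iW·G_iη(p_iG_i + EK_i)/(z†_i·σ²·ln 2) for 0 ≤ E ≤ E_i^lim, S_i(E) := λ_iW(1 − E/p_b)·log₂(1 + X_i·E/(p_b − E)) for E_i^lim < E ≤ E_i^o. Let 0 < E_b^tot < Σ_i E_i^o. Suppose ν ≥ 0 and E* = (E_1*,…,E_N*) satisfy: E_i*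 = γ_i(ν) whenever ν < α_i; 0 ≤ E_i* ≤ E_i^lim whenever ν = α_i; E_i* = 0 whenever ν > α_i; and Σ_i E_i* = E_b^tot. Then E* is a global maximizer of Σ_i S_i(E_i) over {(E_1,…,E_N) : 0 ≤ E_i ≤ E_i^o for all i, and Σ_i E_i ≤ E_b^tot}. -/

import Mathlib

private lemma psiAnti (X : ℝ) (hX : 0 < X) :
    StrictAntiOn (fun z : ℝ => (z - 1 + X) / z - Real.log z) (Set.Ici 1) := by
  apply strictAntiOn_of_deriv_neg (convex_Ici 1)
  · apply ContinuousOn.sub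
    · apply ContinuousOn.div (by fun_prop) continuousOn_id
      intro z hz
      have h1 : (1:ℝ) ≤ z := hz
      simp only [id]
      intro h
      rw [h] at h1; linarith
    · apply Real.continuousOn_log.mono
      intro z hz
      have h1 : (1:ℝ) ≤ z := hz
      simp only [Set.mem_compl_iff, Set.mem_singleton_iff]
      intro h; rw [h] at h1; linarith
  · intro z hz
    rw [interior_Ici] at hz
    have hz1 : 1 < z := hz
    have hz0 : 0 < z := by linarith
    have hd : HasDerivAt (fun z : ℝ => (z - 1 + X) / z - Real.log z)
        ((1 * z - (z - 1 + X) * 1) / z ^ 2 - z⁻¹) z := by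
      exact (((((hasDerivAt_id z).sub_const 1).add_const X).div (hasDerivAt_id z)
        (ne_of_gt hz0))).sub (Real.hasDerivAt_log (ne_of_gt hz0))
    rw [hd.deriv]
    have heq : (1 * z - (z - 1 + X) * 1) / z ^ 2 - z⁻¹ = -((z - 1 + X) / z ^ 2) := by
      field_simp
      ring
    rw [heq]
    have hp : 0 < z - 1 + X := by linarith
    have : 0 < (z - 1 + X) / z ^ 2 := by positivity
    linarith

private lemma gMono : StrictMonoOn (fun z : ℝ => z * Real.log z - z + 1) (Set.Ici 1) := by
  apply strictMonoOn_of_deriv_pos (convex_Ici 1)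
  · apply ContinuousOn.add
    · apply ContinuousOn.sub
      · apply ContinuousOn.mul continuousOn_id
        apply Real.continuousOn_log.mono
        intro z hz
        have h1 : (1:ℝ) ≤ z := hz
        simp only [Set.mem_compl_iff, Set.mem_singleton_iff]
        intro h; rw [h] at h1; linarith
      · exact continuousOn_id
    · exact continuousOn_const
  · intro z hz
    rw [interior_Ici] at hz
    have hz1 : 1 < z := hz
    have hz0 : 0 < z := by linarith
    have hd : HasDerivAt (fun z : ℝ => z * Real.log z - z + 1)
        (1 * Real.log z + z * z⁻¹ - 1) z := by
      have := (((hasDerivAt_id z).mul (Real.hasDerivAt_log (ne_of_gt hz0))).sub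
        (hasDerivAt_id z)).add_const 1
      simpa using this
    rw [hd.deriv]
    have h2 : z * z⁻¹ = 1 := mul_inv_cancel₀ (ne_of_gt hz0)
    rw [h2]
    have : 0 < Real.log z := Real.log_pos hz1
    linarith

private lemma Emono (pb X : ℝ) (hpb : 0 < pb) (hX : 0 < X) {z1 z2 : ℝ}
    (h1 : 1 ≤ z1) (h : z1 ≤ z2) :
    pb * (z1 - 1) / (z1 - 1 + X) ≤ pb * (z2 - 1) / (z2 - 1 + X) := by
  rw [div_le_div_iff₀ (by linarith) (by linarith)]
  nlinarith [mul_nonneg (mul_nonneg hpb.le hX.le) (sub_nonneg.mpr h)]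

private lemma EmonoStrict (pb X : ℝ) (hpb : 0 < pb) (hX : 0 < X) {z1 z2 : ℝ}
    (h1 : 1 ≤ z1) (h : z1 < z2) :
    pb * (z1 - 1) / (z1 - 1 + X) < pb * (z2 - 1) / (z2 - 1 + X) := by
  rw [div_lt_div_iff₀ (by linarith) (by linarith)]
  nlinarith [mul_pos (mul_pos hpb hX) (sub_pos.mpr h)]

private lemma keyF (X c : ℝ) (hX : 0 < X) (zst : ℝ) (hzst : 1 < zst)
    (hc : (zst - 1 + X) / zst - Real.log zst = c) :
    ∀ z, 1 ≤ z →
      (X * Real.log z - c * (z - 1)) / (z - 1 + X) ≤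
      (X * Real.log zst - c * (zst - 1)) / (zst - 1 + X) := by
  set F : ℝ → ℝ := fun z => (X * Real.log z - c * (z - 1)) / (z - 1 + X) with hF
  have hderiv : ∀ z : ℝ, 1 ≤ z → HasDerivAt F
      (((X * z⁻¹ - c * 1) * (z - 1 + X) - (X * Real.log z - c * (z - 1)) * 1) /
        (z - 1 + X) ^ 2) z := by
    intro z hz
    have hz0 : 0 < z := by linarith
    have hD : z - 1 + X ≠ 0 := by intro h; nlinarith
    have h1 : HasDerivAt (fun z : ℝ => X * Real.log z - c * (z - 1)) (X * z⁻¹ - c * 1) z :=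
      ((Real.hasDerivAt_log (ne_of_gt hz0)).const_mul X).sub
        (((hasDerivAt_id z).sub_const 1).const_mul c)
    have h2 : HasDerivAt (fun z : ℝ => z - 1 + X) 1 z :=
      ((hasDerivAt_id z).sub_const 1).add_const X
    exact h1.div h2 hD
  have hsign : ∀ z : ℝ, 1 ≤ z →
      ((X * z⁻¹ - c * 1) * (z - 1 + X) - (X * Real.log z - c * (z - 1)) * 1) /
        (z - 1 + X) ^ 2
      = X * (((z - 1 + X) / z - Real.log z) - c) / (z - 1 + X) ^ 2 := by
    intro z hz
    have hz0 : (0:ℝ) < z := by linarith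
    have hD : (0:ℝ) < z - 1 + X := by linarith
    field_simp
    ring
  have hcont : ContinuousOn F (Set.Ici 1) := fun z hz =>
    ((hderiv z hz).continuousAt.continuousWithinAt)
  have hzstm : zst ∈ Set.Ici (1:ℝ) := le_of_lt hzst
  have hmono : MonotoneOn F (Set.Icc 1 zst) := by
    apply monotoneOn_of_deriv_nonneg (convex_Icc 1 zst)
      (hcont.mono (Set.Icc_subset_Ici_self))
    · intro z hz
      rw [interior_Icc] at hz
      exact ((hderiv z hz.1.le).differentiableAt).differentiableWithinAt
    · intro z hz
      rw [interior_Icc] at hz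
      rw [(hderiv z hz.1.le).deriv, hsign z hz.1.le]
      have hψ : c < (z - 1 + X) / z - Real.log z := by
        have h5 := psiAnti X hX (Set.mem_Ici.mpr hz.1.le) hzstm hz.2
        simp only [] at h5
        linarith [hc ▸ h5]
      have hD : (0:ℝ) < z - 1 + X := by nlinarith [hz.1]
      apply div_nonneg
      · nlinarith
      · positivity
  have hanti : AntitoneOn F (Set.Ici zst) := by
    apply antitoneOn_of_deriv_nonpos (convex_Ici zst)
      (hcont.mono (Set.Ici_subset_Ici.mpr hzstm))
    · intro z hz
      rw [interior_Ici] at hz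
      have : (1:ℝ) ≤ z := le_trans hzstm hz.le
      exact ((hderiv z this).differentiableAt).differentiableWithinAt
    · intro z hz
      rw [interior_Ici] at hz
      have hz1 : (1:ℝ) ≤ z := le_trans hzstm hz.le
      rw [(hderiv z hz1).deriv, hsign z hz1]
      have hψ : (z - 1 + X) / z - Real.log z < c := by
        have h5 := psiAnti X hX hzstm (Set.mem_Ici.mpr hz1) hz
        simp only [] at h5
        linarith [hc ▸ h5]
      have hD : (0:ℝ) < z - 1 + X := by nlinarith
      apply div_nonpos_of_nonpos_of_nonneg
      · nlinarith
      · positivity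
  intro z hz
  rcases le_total z zst with h | h
  · exact hmono (Set.mem_Icc.mpr ⟨hz, h⟩) (Set.mem_Icc.mpr ⟨le_of_lt hzst, le_refl _⟩) h
  · exact hanti (Set.mem_Ici.mpr (le_refl _)) (Set.mem_Ici.mpr h) h

set_option maxHeartbeats 2000000 in
/-- Water-filling characterization of the social-welfare-maximizing energy
allocation: if ν ≥ 0 and E* satisfy E*_i = γ_i(ν) when ν < α_i, 0 ≤ E*_i ≤ E_i^lim when
ν = α_i, E*_i = 0 when ν > α_i, and Σ E*_i = E_b^tot, then E* globally maximizes
Σ S_i(E_i) over {0 ≤ E_i ≤ E_i^o, Σ E_i ≤ E_b^tot}. -/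
theorem stmt_16 (N : ℕ) (hN : 1 ≤ N)
    (σ2 η pb W : ℝ)
    (hσ2 : 0 < σ2) (hη : 0 < η) (hpb : 0 < pb) (hW : 0 < W)
    (G K p lam : Fin N → ℝ)
    (hG : ∀ i, 0 < G i) (hK : ∀ i, 0 < K i)
    (hp : ∀ i, 0 < p i) (hlam : ∀ i, 0 < lam i)
    (A X : Fin N → ℝ)
    (hA : ∀ i, A i = (G i) ^ 2 * η * p i / σ2)
    (hX : ∀ i, X i = G i * η * (p i * G i + pb * K i) / σ2)
    (zdag : Fin N → ℝ)
    (hzdag : ∀ i, 1 < zdag i ∧ zdag i * Real.log (zdag i) - zdag i + 1 = A i)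
    (Elim : Fin N → ℝ)
    (hElim : ∀ i, Elim i = pb * (zdag i - 1) / (zdag i - 1 + X i))
    (α : Fin N → ℝ)
    (hα : ∀ i, α i = lam i * W * G i * η * K i / (zdag i * σ2 * Real.log 2))
    (zdd : Fin N → ℝ)
    (hzdd : ∀ i, 1 < zdd i ∧ zdd i * Real.log (zdd i) - zdd i + 1 = X i)
    (Eo : Fin N → ℝ)
    (hEo : ∀ i, Eo i = pb * (zdd i - 1) / (zdd i - 1 + X i))
    (zsect : Fin N → ℝ → ℝ)
    (hzsect : ∀ i, ∀ ν : ℝ, 0 ≤ ν → ν < α i → 1 < zsect i ν ∧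
      zsect i ν * Real.log (zsect i ν)
        + (ν * pb * Real.log 2 / (lam i * W) - 1) * zsect i ν + 1 = X i)
    (γ : Fin N → ℝ → ℝ)
    (hγ : ∀ i, ∀ ν : ℝ, γ i ν = pb * (zsect i ν - 1) * σ2 /
      ((zsect i ν - 1) * σ2 + G i * η * (p i * G i + pb * K i)))
    (S : Fin N → ℝ → ℝ)
    (hS1 : ∀ i, ∀ E : ℝ, 0 ≤ E → E ≤ Elim i →
      S i E = lam i * W * G i * η * (p i * G i + E * K i) / (zdag i * σ2 * Real.log 2))
    (hS2 : ∀ i, ∀ E : ℝ, Elim i < E → E ≤ Eo i →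
      S i E = lam i * W * (1 - E / pb) * Real.logb 2 (1 + X i * E / (pb - E)))
    (Ebtot : ℝ) (hEb0 : 0 < Ebtot) (hEb : Ebtot < ∑ i, Eo i)
    (ν : ℝ) (hν : 0 ≤ ν)
    (Estar : Fin N → ℝ)
    (h1 : ∀ i, ν < α i → Estar i = γ i ν)
    (h2 : ∀ i, ν = α i → 0 ≤ Estar i ∧ Estar i ≤ Elim i)
    (h3 : ∀ i, α i < ν → Estar i = 0)
    (hsum : ∑ i, Estar i = Ebtot) :
    (∀ i, 0 ≤ Estar i ∧ Estar i ≤ Eo i) ∧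
    ∀ E : Fin N → ℝ, (∀ i, 0 ≤ E i ∧ E i ≤ Eo i) → (∑ i, E i) ≤ Ebtot →
      (∑ i, S i (E i)) ≤ ∑ i, S i (Estar i) := by
  have hlog2 : (0:ℝ) < Real.log 2 := Real.log_pos (by norm_num)
  have hmain : ∀ i, (0 ≤ Estar i ∧ Estar i ≤ Eo i) ∧
      ∀ E : ℝ, 0 ≤ E → E ≤ Eo i → S i E - ν * E ≤ S i (Estar i) - ν * Estar i := by
    intro i
    have hGi := hG i; have hKi := hK i; have hpi := hp i; have hlami := hlam i
    have hXi : 0 < X i := by rw [hX]; positivity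
    have hAi : 0 < A i := by rw [hA]; positivity
    have hLi : 0 < lam i * W := mul_pos hlami hW
    have hXAi : X i - A i = G i * η * pb * K i / σ2 := by
      rw [hX, hA]; field_simp; ring
    have hXA : A i < X i := by
      have h9 : 0 < G i * η * pb * K i / σ2 := by positivity
      linarith only [h9, hXAi]
    obtain ⟨hzdag1, hzdagE⟩ := hzdag i
    obtain ⟨hzdd1, hzddE⟩ := hzdd i
    have hzdag0 : (0:ℝ) < zdag i := by linarith only [hzdag1]
    have hzdd0 : (0:ℝ) < zdd i := by linarith only [hzdd1]
    have hzdagzdd : zdag i < zdd i := by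
      have h9 := (gMono.lt_iff_lt (Set.mem_Ici.mpr hzdag1.le) (Set.mem_Ici.mpr hzdd1.le))
      apply h9.mp
      rw [hzdagE, hzddE]; exact hXA
    have hDdag : 0 < zdag i - 1 + X i := by linarith only [hzdag1, hXi]
    have hDdd : 0 < zdd i - 1 + X i := by linarith only [hzdd1, hXi]
    have hElim0 : 0 ≤ Elim i := by
      rw [hElim]; apply div_nonneg _ hDdag.le
      nlinarith only [hpb, hzdag1]
    have hElimEo : Elim i < Eo i := by
      rw [hElim, hEo]; exact EmonoStrict pb (X i) hpb hXi hzdag1.le hzdagzdd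
    have hEopb : Eo i < pb := by
      rw [hEo, div_lt_iff₀ hDdd]; nlinarith only [mul_pos hpb hXi]
    have hEo0 : 0 < Eo i := by
      rw [hEo]; apply div_pos _ hDdd
      nlinarith only [hpb, hzdd1]
    have hlogdag : Real.log (zdag i) = (A i + zdag i - 1) / zdag i := by
      rw [eq_div_iff (ne_of_gt hzdag0)]; linear_combination hzdagE
    have hlogdd : Real.log (zdd i) = (X i + zdd i - 1) / zdd i := by
      rw [eq_div_iff (ne_of_gt hzdd0)]; linear_combination hzddE
    have hcα : α i = (X i - A i) * (lam i * W) / (zdag i * pb * Real.log 2) := by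
      rw [hα, hXAi]; field_simp
    have hψdag : (zdag i - 1 + X i) / zdag i - Real.log (zdag i)
        = α i * pb * Real.log 2 / (lam i * W) := by
      rw [hlogdag, hcα]; field_simp; ring
    have hψdd : (zdd i - 1 + X i) / zdd i - Real.log (zdd i) = 0 := by
      rw [hlogdd]; field_simp; ring
    have hlin : ∀ E, 0 ≤ E → E ≤ Elim i → S i E = S i 0 + α i * E := by
      intro E h0 h1'
      rw [hS1 i E h0 h1', hS1 i 0 le_rfl hElim0, hα]
      field_simp; ring
    have hS0 : S i 0 = lam i * W * A i / (zdag i * Real.log 2) := by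
      rw [hS1 i 0 le_rfl hElim0, hA]; field_simp; ring
    have hchord : S i 0 + α i * Elim i =
        lam i * W / Real.log 2 * (X i * Real.log (zdag i) / (zdag i - 1 + X i)) := by
      rw [hS0, hcα, hElim, hlogdag]
      field_simp
      ring
    have hSeq : ∀ (c : ℝ), ∀ E, Elim i < E → E ≤ Eo i →
        S i E - lam i * W * c / (Real.log 2 * pb) * E =
        lam i * W / Real.log 2 *
          ((X i * Real.log (1 + X i * E / (pb - E)) - c * (1 + X i * E / (pb - E) - 1)) /
            (1 + X i * E / (pb - E) - 1 + X i)) := by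
      intro c E hE1 hE2
      have hE0 : 0 < E := lt_of_le_of_lt hElim0 hE1
      have hpbE : 0 < pb - E := by linarith only [hE2, hEopb]
      have hzz : 0 < X i * E / (pb - E) := by positivity
      rw [hS2 i E hE1 hE2, Real.logb]
      have e1 : 1 + X i * E / (pb - E) - 1 = X i * E / (pb - E) := by ring
      have e2 : X i * E / (pb - E) + X i = X i * pb / (pb - E) := by
        field_simp; ring
      have hpbE' : pb - E ≠ 0 := ne_of_gt hpbE
      rw [e1, e2]
      field_simp
    have hcurvbound : ∀ (c zs : ℝ), 1 < zs →
        (zs - 1 + X i) / zs - Real.log zs = c →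
        ∀ E, Elim i < E → E ≤ Eo i →
        S i E - lam i * W * c / (Real.log 2 * pb) * E ≤
          lam i * W / Real.log 2 *
            ((X i * Real.log zs - c * (zs - 1)) / (zs - 1 + X i)) := by
      intro c zs hzs hψ E hE1 hE2
      rw [hSeq c E hE1 hE2]
      apply mul_le_mul_of_nonneg_left _ (by positivity)
      apply keyF (X i) c hXi zs hzs hψ
      have hE0 : 0 < E := lt_of_le_of_lt hElim0 hE1
      have hpbE : 0 < pb - E := by linarith only [hE2, hEopb]
      have : 0 < X i * E / (pb - E) := by positivity
      linarith only [this]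
    have hmulα : lam i * W * (α i * pb * Real.log 2 / (lam i * W)) / (Real.log 2 * pb)
        = α i := by field_simp
    have hαElim : α i * Elim i = lam i * W / Real.log 2 *
        (α i * pb * Real.log 2 / (lam i * W) * (zdag i - 1) / (zdag i - 1 + X i)) := by
      rw [hElim]; field_simp
    have hcurveα : ∀ E, Elim i < E → E ≤ Eo i → S i E - α i * E ≤ S i 0 := by
      intro E hE1 hE2
      have hb := hcurvbound (α i * pb * Real.log 2 / (lam i * W)) (zdag i) hzdag1 hψdag
        E hE1 hE2
      rw [hmulα] at hb
      have e1 : lam i * W / Real.log 2 *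
          ((X i * Real.log (zdag i) -
            α i * pb * Real.log 2 / (lam i * W) * (zdag i - 1)) / (zdag i - 1 + X i)) =
          lam i * W / Real.log 2 * (X i * Real.log (zdag i) / (zdag i - 1 + X i)) -
          lam i * W / Real.log 2 *
            (α i * pb * Real.log 2 / (lam i * W) * (zdag i - 1) / (zdag i - 1 + X i)) := by
        ring
      linarith only [hb, e1, hchord, hαElim]
    rcases lt_trichotomy ν (α i) with hlt | heq | hgt
    · -- case ν < α i
      obtain ⟨hzs1, hzsE⟩ := hzsect i ν hν hlt
      have hzs0 : (0:ℝ) < zsect i ν := by linarith only [hzs1]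
      have hψs : (zsect i ν - 1 + X i) / zsect i ν - Real.log (zsect i ν)
          = ν * pb * Real.log 2 / (lam i * W) := by
        have hls : Real.log (zsect i ν) =
            (X i - 1 - (ν * pb * Real.log 2 / (lam i * W) - 1) * zsect i ν) / zsect i ν := by
          rw [eq_div_iff (ne_of_gt hzs0)]; linear_combination hzsE
        rw [hls]; field_simp; ring
      have hcνα : ν * pb * Real.log 2 / (lam i * W) < α i * pb * Real.log 2 / (lam i * W) := by
        rw [div_lt_div_iff₀ hLi hLi]
        exact mul_lt_mul_of_pos_right (mul_lt_mul_of_pos_right (mul_lt_mul_of_pos_right hlt hpb) hlog2) hLi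
      have hcν0 : 0 ≤ ν * pb * Real.log 2 / (lam i * W) := by positivity
      have hzsdag : zdag i < zsect i ν := by
        have h9 := (psiAnti (X i) hXi).lt_iff_gt
          (Set.mem_Ici.mpr hzs1.le) (Set.mem_Ici.mpr hzdag1.le)
        apply h9.mp
        rw [hψs, hψdag]; exact hcνα
      have hzszdd : zsect i ν ≤ zdd i := by
        by_contra h
        push_neg at h
        have h9 := ((psiAnti (X i) hXi).lt_iff_gt
          (Set.mem_Ici.mpr hzs1.le) (Set.mem_Ici.mpr hzdd1.le)).mpr h
        rw [hψs, hψdd] at h9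
        linarith only [h9, hcν0]
      have hγval : Estar i = pb * (zsect i ν - 1) / (zsect i ν - 1 + X i) := by
        rw [h1 i hlt, hγ]
        have hXs : G i * η * (p i * G i + pb * K i) = X i * σ2 := by
          rw [hX]; field_simp
        rw [hXs]
        have hD1 : (zsect i ν - 1) * σ2 + X i * σ2 ≠ 0 := by
          have := mul_pos hXi hσ2
          have h7 : 0 ≤ (zsect i ν - 1) * σ2 := mul_nonneg (by linarith only [hzs1]) hσ2.le
          nlinarith only [this, h7]
        have hD2 : zsect i ν - 1 + X i ≠ 0 := by nlinarith only [hzs1, hXi]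
        field_simp
      have hEstarElim : Elim i < Estar i := by
        rw [hγval, hElim]; exact EmonoStrict pb (X i) hpb hXi hzdag1.le hzsdag
      have hEstarEo : Estar i ≤ Eo i := by
        rw [hγval, hEo]; exact Emono pb (X i) hpb hXi hzs1.le hzszdd
      have hEstar0 : 0 ≤ Estar i := le_trans hElim0 hEstarElim.le
      refine ⟨⟨hEstar0, hEstarEo⟩, ?_⟩
      have hDs : (0:ℝ) < zsect i ν - 1 + X i := by linarith only [hzs1, hXi]
      have hpbEs : 0 < pb - Estar i := by linarith only [hEstarEo, hEopb]
      have hzEstar : 1 + X i * Estar i / (pb - Estar i) = zsect i ν := by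
        rw [hγval]
        have e1 : pb - pb * (zsect i ν - 1) / (zsect i ν - 1 + X i)
            = pb * X i / (zsect i ν - 1 + X i) := by
          field_simp; ring
        rw [e1]
        field_simp
        ring
      have hmulν : lam i * W * (ν * pb * Real.log 2 / (lam i * W)) / (Real.log 2 * pb)
          = ν := by field_simp
      have hval : S i (Estar i) - ν * Estar i =
          lam i * W / Real.log 2 *
            ((X i * Real.log (zsect i ν) -
              ν * pb * Real.log 2 / (lam i * W) * (zsect i ν - 1)) /
              (zsect i ν - 1 + X i)) := by
        have h9 := hSeq (ν * pb * Real.log 2 / (lam i * W)) (Estar i) hEstarElim hEstarEo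
        rw [hmulν, hzEstar] at h9
        exact h9
      intro E hE0 hEEo
      rcases le_or_gt E (Elim i) with hc | hc
      · rw [hlin E hE0 hc]
        have hb1 := mul_le_mul_of_nonneg_left
          (keyF (X i) (ν * pb * Real.log 2 / (lam i * W)) hXi (zsect i ν) hzs1 hψs
            (zdag i) hzdag1.le)
          (le_of_lt (by positivity : (0:ℝ) < lam i * W / Real.log 2))
        have hνElim : ν * Elim i = lam i * W / Real.log 2 *
            (ν * pb * Real.log 2 / (lam i * W) * (zdag i - 1) / (zdag i - 1 + X i)) := by
          rw [hElim]; field_simp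
        have e1 : lam i * W / Real.log 2 *
            ((X i * Real.log (zdag i) -
              ν * pb * Real.log 2 / (lam i * W) * (zdag i - 1)) / (zdag i - 1 + X i)) =
            lam i * W / Real.log 2 * (X i * Real.log (zdag i) / (zdag i - 1 + X i)) -
            lam i * W / Real.log 2 *
              (ν * pb * Real.log 2 / (lam i * W) * (zdag i - 1) / (zdag i - 1 + X i)) := by
          ring
        have e2 := hval.symm
        have hprod : 0 ≤ α i * Elim i - α i * E - ν * Elim i + ν * E := by
          have h8 := mul_nonneg (sub_nonneg.mpr hlt.le) (sub_nonneg.mpr hc)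
          linarith only [h8]
        linarith only [hb1, e1, e2, hchord, hνElim, hprod]
      · have hb := hcurvbound (ν * pb * Real.log 2 / (lam i * W)) (zsect i ν) hzs1 hψs
          E hc hEEo
        rw [hmulν] at hb
        linarith only [hval, hb]
    · -- case ν = α
      obtain ⟨hE0s, hEls⟩ := h2 i heq
      refine ⟨⟨hE0s, le_trans hEls hElimEo.le⟩, ?_⟩
      have htar : S i (Estar i) - ν * Estar i = S i 0 := by
        rw [hlin _ hE0s hEls, heq]; ring
      intro E hE0 hEEo
      rw [htar, heq]
      rcases le_or_gt E (Elim i) with hc | hc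
      · rw [hlin E hE0 hc]; linarith only []
      · exact hcurveα E hc hEEo
    · -- case α < ν
      have hE0' := h3 i hgt
      refine ⟨⟨by rw [hE0'], by rw [hE0']; exact hEo0.le⟩, ?_⟩
      have htar : S i (Estar i) - ν * Estar i = S i 0 := by rw [hE0']; ring
      intro E hE0 hEEo
      rw [htar]
      rcases le_or_gt E (Elim i) with hc | hc
      · rw [hlin E hE0 hc]
        have h8 := mul_nonneg (sub_nonneg.mpr hgt.le) hE0
        linarith only [h8]
      · have h9 := hcurveα E hc hEEo
        have h8 := mul_nonneg (sub_nonneg.mpr hgt.le) hE0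
        linarith only [h8, h9]
  constructor
  · exact fun i => (hmain i).1
  · intro E hE hEsum
    have hsumle := Finset.sum_le_sum
      (fun i (_ : i ∈ Finset.univ) => (hmain i).2 (E i) (hE i).1 (hE i).2)
    rw [Finset.sum_sub_distrib, Finset.sum_sub_distrib, ← Finset.mul_sum, ← Finset.mul_sum,
      hsum] at hsumle
    have h9 : ν * (∑ i, E i) ≤ ν * Ebtot := mul_le_mul_of_nonneg_left hEsum hν
    linarith only [hsumle, h9]
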